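/- Let Γ be a finite simple graph. If the center of the right-angled Artin group A(Γ) is nontrivial, then BB(Γ) is isomorphic to A(Δ) for some finite simple graph Δ, i.e., BB(Γ) is a right-angled Artin group. -/

import Mathlib

def raagRels {V : Type} (G : SimpleGraph V) : Set (FreeGroup V) :=
  {r | ∃ v w : V, G.Adj v w ∧
    r = FreeGroup.of v * FreeGroup.of w * (FreeGroup.of v)⁻¹ * (FreeGroup.of w)⁻¹}

/-- The right-angled Artin group of a simple graph. -/
abbrev RAAG {V : Type} (G : SimpleGraph V) : Type := PresentedGroup (raagRels G)

/-- The canonical generator of `RAAG G` corresponding to a vertex. -/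
def raagGen {V : Type} (G : SimpleGraph V) (v : V) : RAAG G :=
  PresentedGroup.of (rels := raagRels G) v

/-- The homomorphism `A(Γ) → ℤ` sending every vertex generator to `1`. -/
def bbgChar {V : Type} (G : SimpleGraph V) : RAAG G →* Multiplicative ℤ :=
  PresentedGroup.toGroup (f := fun _ : V => Multiplicative.ofAdd (1 : ℤ)) (by
    rintro r ⟨v, w, -, rfl⟩
    simp only [map_mul, map_inv, FreeGroup.lift_apply_of]
    group)

/-- The Bestvina–Brady group of a simple graph, as a subgroup of the RAAG. -/
def BBG {V : Type} (G : SimpleGraph V) : Subgroup (RAAG G) := (bbgChar G).ker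

/-- A group is a RAAG if it is isomorphic to the RAAG on some finite simple graph. -/
def IsRAAG (H : Type) [Group H] : Prop :=
  ∃ (W : Type) (_ : Fintype W) (Δ : SimpleGraph W), Nonempty (H ≃* RAAG Δ)

open scoped Classical

section Basic

variable {V : Type} {G : SimpleGraph V} {K : Type*} [Group K]

/-- universal property of a RAAG -/
def raagHom (f : V → K) (hf : ∀ v w, G.Adj v w → Commute (f v) (f w)) : RAAG G →* K :=
  PresentedGroup.toGroup (f := f) (by
    rintro r ⟨v, w, hvw, rfl⟩
    simp only [map_mul, map_inv, FreeGroup.lift_apply_of]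
    have := (hf v w hvw).eq
    group
    rw [this]
    group)

@[simp] lemma raagHom_gen (f : V → K) (hf) (v : V) :
    raagHom (G := G) f hf (raagGen G v) = f v :=
  PresentedGroup.toGroup.of _

lemma raagHom_ext {φ ψ : RAAG G →* K} (h : ∀ v, φ (raagGen G v) = ψ (raagGen G v)) :
    φ = ψ :=
  PresentedGroup.ext h

lemma raagGen_commute {v w : V} (h : G.Adj v w) :
    Commute (raagGen G v) (raagGen G w) := by
  have hr : (FreeGroup.of v * FreeGroup.of w * (FreeGroup.of v)⁻¹ * (FreeGroup.of w)⁻¹ :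
      FreeGroup V) ∈ Subgroup.normalClosure (raagRels G) :=
    Subgroup.subset_normalClosure ⟨v, w, h, rfl⟩
  have : (PresentedGroup.mk (raagRels G))
      (FreeGroup.of v * FreeGroup.of w * (FreeGroup.of v)⁻¹ * (FreeGroup.of w)⁻¹) = 1 := by
    exact (QuotientGroup.eq_one_iff _).2 hr
  simp only [map_mul, map_inv] at this
  have h1 : raagGen G v * raagGen G w * (raagGen G v)⁻¹ * (raagGen G w)⁻¹ = 1 := this
  rw [Commute, SemiconjBy, ← mul_inv_eq_one]
  have : raagGen G v * raagGen G w * (raagGen G w * raagGen G v)⁻¹ =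
      raagGen G v * raagGen G w * (raagGen G v)⁻¹ * (raagGen G w)⁻¹ := by group
  rw [this, h1]

lemma raag_generated (H : Subgroup (RAAG G)) (h : ∀ v, raagGen G v ∈ H) (x : RAAG G) :
    x ∈ H :=
  PresentedGroup.generated_by _ H h x

end Basic

section Induced

variable {V : Type} (G : SimpleGraph V)

/-- induced subgraph on a set of vertices -/
abbrev indG (S : Set V) : SimpleGraph S := G.comap (Subtype.val)

/-- inclusion of the RAAG of an induced subgraph -/
def raagIncl (S : Set V) : RAAG (indG G S) →* RAAG G :=
  raagHom (fun u => raagGen G u.val) (fun u w h => raagGen_commute h)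

@[simp] lemma raagIncl_gen (S : Set V) (u : S) :
    raagIncl G S (raagGen _ u) = raagGen G u.val := raagHom_gen _ _ _

/-- projection onto the RAAG of an induced subgraph, killing outside generators -/
noncomputable def raagProj (S : Set V) : RAAG G →* RAAG (indG G S) :=
  raagHom (fun v => if h : v ∈ S then raagGen _ (⟨v, h⟩ : S) else 1)
    (by
      intro v w hvw
      by_cases hv : v ∈ S <;> by_cases hw : w ∈ S <;>
        simp [hv, hw, Commute.one_left, Commute.one_right]
      exact raagGen_commute (by exact hvw))

@[simp] lemma raagProj_gen (S : Set V) (v : V) :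
    raagProj G S (raagGen G v) = if h : v ∈ S then raagGen _ (⟨v, h⟩ : S) else 1 :=
  raagHom_gen _ _ _

lemma raagProj_comp_incl (S : Set V) :
    (raagProj G S).comp (raagIncl G S) = MonoidHom.id _ := by
  apply raagHom_ext
  intro u
  simp

lemma raagIncl_injective (S : Set V) : Function.Injective (raagIncl G S) := by
  have h := raagProj_comp_incl G S
  intro a b hab
  have := congrArg (raagProj G S) hab
  calc a = (raagProj G S).comp (raagIncl G S) a := by rw [h]; rfl
  _ = (raagProj G S).comp (raagIncl G S) b := this
  _ = b := by rw [h]; rfl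

/-- inclusion between RAAGs of nested induced subgraphs -/
def raagSubIncl {S T : Set V} (h : S ⊆ T) : RAAG (indG G S) →* RAAG (indG G T) :=
  raagHom (fun u => raagGen _ (⟨u.val, h u.2⟩ : T))
    (fun u w huw => raagGen_commute (by exact huw))

@[simp] lemma raagSubIncl_gen {S T : Set V} (h : S ⊆ T) (u : S) :
    raagSubIncl G h (raagGen _ u) = raagGen _ (⟨u.val, h u.2⟩ : T) := raagHom_gen _ _ _

lemma raagIncl_comp_subIncl {S T : Set V} (h : S ⊆ T) :
    (raagIncl G T).comp (raagSubIncl G h) = raagIncl G S := by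
  apply raagHom_ext; intro u; simp

lemma raagSubIncl_injective {S T : Set V} (h : S ⊆ T) :
    Function.Injective (raagSubIncl G h) := by
  intro a b hab
  apply raagIncl_injective G S
  rw [← raagIncl_comp_subIncl G h]
  simp [MonoidHom.comp_apply, hab]

/-- the parabolic subgroup on a vertex set -/
def raagP (S : Set V) : Subgroup (RAAG G) :=
  Subgroup.closure (Set.range fun u : S => raagGen G u.val)

lemma raagP_mono {S T : Set V} (h : S ⊆ T) : raagP G S ≤ raagP G T := by
  apply Subgroup.closure_mono
  rintro x ⟨u, rfl⟩
  exact ⟨⟨u.val, h u.2⟩, rfl⟩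

lemma raagGen_mem_P {S : Set V} {v : V} (hv : v ∈ S) : raagGen G v ∈ raagP G S :=
  Subgroup.subset_closure ⟨⟨v, hv⟩, rfl⟩

/-- the retraction onto a parabolic -/
noncomputable def raagRho (S : Set V) : RAAG G →* RAAG G := (raagIncl G S).comp (raagProj G S)

lemma raagRho_gen (S : Set V) (v : V) :
    raagRho G S (raagGen G v) = if v ∈ S then raagGen G v else 1 := by
  by_cases h : v ∈ S <;> simp [raagRho, h]

lemma raagRho_mem_P (S : Set V) (z : RAAG G) : raagRho G S z ∈ raagP G S := by
  refine raag_generated ((raagP G S).comap (raagRho G S)) ?_ z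
  intro v
  simp only [Subgroup.mem_comap, raagRho_gen]
  by_cases h : v ∈ S <;> simp [h]
  exact raagGen_mem_P G h

lemma raagRho_of_mem_P {S : Set V} {z : RAAG G} (hz : z ∈ raagP G S) :
    raagRho G S z = z := by
  induction hz using Subgroup.closure_induction with
  | mem x hx => obtain ⟨u, rfl⟩ := hx; simp [raagRho_gen, u.2]
  | one => simp
  | mul a b _ _ ha hb => simp [map_mul, ha, hb]
  | inv a _ ha => simp [map_inv, ha]

lemma mem_P_iff_rho {S : Set V} {z : RAAG G} : z ∈ raagP G S ↔ raagRho G S z = z :=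
  ⟨raagRho_of_mem_P G, fun h => h ▸ raagRho_mem_P G S z⟩

lemma raagRho_comp (S T : Set V) :
    (raagRho G S).comp (raagRho G T) = raagRho G (S ∩ T) := by
  apply raagHom_ext
  intro v
  simp only [MonoidHom.comp_apply, raagRho_gen]
  by_cases hT : v ∈ T <;> by_cases hS : v ∈ S <;>
    simp [hT, hS, raagRho_gen, Set.mem_inter_iff]

lemma raagRho_univ : raagRho G Set.univ = MonoidHom.id _ := by
  apply raagHom_ext; intro v; simp [raagRho_gen]

lemma raagRho_empty (z : RAAG G) : raagRho G (∅ : Set V) z = 1 := by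
  have : raagRho G (∅ : Set V) = 1 := by
    apply raagHom_ext; intro v; simp [raagRho_gen]
  rw [this]; rfl

/-- elements in all coordinate-deleted parabolics are trivial -/
lemma eq_one_of_mem_all_P {V : Type} [Fintype V] (G : SimpleGraph V) (z : RAAG G)
    (hz : ∀ v : V, z ∈ raagP G {u | u ≠ v}) : z = 1 := by
  have key : ∀ T : Finset V, raagRho G {u | u ∉ T} z = z := by
    intro T
    induction T using Finset.induction with
    | empty =>
      have : ({u | u ∉ (∅ : Finset V)} : Set V) = Set.univ := by ext u; simp
      rw [this, raagRho_univ]; rfl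
    | @insert v T hv ih =>
      have hset : ({u | u ∉ insert v T} : Set V) = {u | u ≠ v} ∩ {u | u ∉ T} := by
        ext u; simp [not_or]
      rw [hset, ← raagRho_comp, MonoidHom.comp_apply, ih,
        raagRho_of_mem_P G (hz v)]
  have h1 := key Finset.univ
  have : ({u | u ∉ (Finset.univ : Finset V)} : Set V) = ∅ := by ext u; simp
  rw [this, raagRho_empty] at h1
  exact h1.symm

open Monoid
open PushoutI
open NormalWord
open CoprodI hiding of
open Function

section Amalgam

variable {ι : Type*} {H : Type*} {G : ι → Type*} [Group H] [∀ i, Group (G i)]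
  {φ : ∀ i, H →* G i} (d : Transversal φ)
  [DecidableEq ι] [∀ i, DecidableEq (G i)]

lemma not_mem_range_of_mem_set {i : ι} {g : G i} (hset : g ∈ d.set i) (hne : g ≠ 1) :
    g ∉ (φ i).range := by
  rintro ⟨x, rfl⟩
  have hinj := (d.compl i).1
  have := hinj (a₁ := (⟨φ i x, MonoidHom.mem_range.2 ⟨x, rfl⟩⟩, ⟨1, d.one_mem i⟩))
      (a₂ := (⟨1, Subgroup.one_mem _⟩, ⟨φ i x, hset⟩)) (by simp)
  apply hne
  have h2 := congrArg (fun p => (p.2 : G i)) this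
  simpa using h2.symm

lemma empty_fstIdx {i : ι} : (empty (d := d)).toWord.fstIdx ≠ some i := by
  simp [empty, Word.fstIdx, Word.empty]

lemma cons_fstIdx {i : ι} (g : G i) (w : NormalWord d) (hmw : w.toWord.fstIdx ≠ some i)
    (hgr : g ∉ (φ i).range) :
    (cons g w hmw hgr).toWord.fstIdx = some i := by
  simp [cons, Word.cons, Word.fstIdx]

lemma fstIdx_base_smul (h : H) (w : NormalWord d) :
    (base φ h • w).toWord.fstIdx = w.toWord.fstIdx := by
  rw [base_smul_def]

lemma key_fstIdx (L : List (Σ i, G i)) :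
    ∀ (ℓ : Σ i, G i)
    (_hch : (ℓ :: L).Chain' fun l l' => l.1 ≠ l'.1)
    (_hred : ∀ l ∈ ℓ :: L, l.2 ∉ (φ l.1).range) {j : ι} (a : G j)
    (ha : a ∉ (φ j).range)
    (_hhead : ℓ.1 ≠ j ∨ L ≠ []),
    (((ℓ :: L).map fun l => of (φ := φ) l.1 l.2).prod •
      cons a empty (empty_fstIdx d) ha).toWord.fstIdx
      = some ℓ.1 := by
  induction L with
  | nil =>
    intro ℓ hch hred j a ha hhead
    have hgrℓ : ℓ.2 ∉ (φ ℓ.1).range := hred ℓ (by simp)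
    have hℓj : ℓ.1 ≠ j := by
      rcases hhead with h | h
      · exact h
      · simp at h
    have hfi : (cons a empty (empty_fstIdx d) ha).toWord.fstIdx
        ≠ some ℓ.1 := by
      rw [cons_fstIdx]
      simp [Ne.symm hℓj]
    simp only [List.map_cons, List.map_nil, List.prod_cons, List.prod_nil, mul_one]
    rw [← cons_eq_smul (hmw := hfi) (hgr := hgrℓ), cons_fstIdx]
  | cons m L'' ih =>
    intro ℓ hch hred j a ha hhead
    have hgrℓ : ℓ.2 ∉ (φ ℓ.1).range := hred ℓ (by simp)
    have hℓm : ℓ.1 ≠ m.1 := (List.isChain_cons_cons.1 hch).1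
    have hchr : (m :: L'').Chain' fun l l' => l.1 ≠ l'.1 := (List.isChain_cons_cons.1 hch).2
    have hredr : ∀ l ∈ m :: L'', l.2 ∉ (φ l.1).range :=
      fun l hl => hred l (List.mem_cons_of_mem _ hl)
    simp only [List.map_cons, List.prod_cons]
    rw [mul_smul]
    by_cases h2 : m.1 ≠ j ∨ L'' ≠ []
    · have hIH := ih m hchr hredr a ha h2
      simp only [List.map_cons, List.prod_cons] at hIH
      have hfi : ((of (φ := φ) m.1 m.2 * ((L''.map fun l => of (φ := φ) l.1 l.2)).prod) •
          cons a empty (empty_fstIdx d) ha).toWord.fstIdx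
          ≠ some ℓ.1 := by
        rw [hIH]; simp [Ne.symm hℓm]
      rw [mul_smul] at hfi ⊢
      rw [← cons_eq_smul (hmw := hfi) (hgr := hgrℓ), cons_fstIdx]
    · push_neg at h2
      obtain ⟨hmj, hL''⟩ := h2
      subst hL''
      obtain ⟨jm, gm⟩ := m
      simp only at hmj
      subst hmj
      have hgm : gm ∉ (φ jm).range := hredr ⟨jm, gm⟩ (by simp)
      simp only [List.map_cons, List.map_nil, List.prod_cons, List.prod_nil, mul_one]
      have hcomb : of (φ := φ) jm gm • (of (φ := φ) jm a • empty (d := d))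
          = of (φ := φ) jm (gm * a) • empty := by
        rw [← mul_smul, ← map_mul]
      rw [cons_eq_smul (hmw := empty_fstIdx d) (hgr := ha), hcomb]
      by_cases hra : gm * a ∈ (φ jm).range
      · obtain ⟨t, ht⟩ := hra
        rw [← ht, of_apply_eq_base φ jm t, ← mul_smul,
          show of (φ := φ) ℓ.1 ℓ.2 * base φ t
            = of ℓ.1 (ℓ.2 * φ ℓ.1 t) by rw [map_mul, of_apply_eq_base]]
        have hgr' : ℓ.2 * φ ℓ.1 t ∉ (φ ℓ.1).range := by
          intro hmem
          exact hgrℓ ((mul_mem_cancel_right (MonoidHom.mem_range.2 ⟨t, rfl⟩)).1 hmem)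
        rw [← cons_eq_smul (hmw := empty_fstIdx d) (hgr := hgr'), cons_fstIdx]
      · rw [← cons_eq_smul (hmw := empty_fstIdx d) (hgr := hra)]
        have hfi : (cons (gm * a) empty (empty_fstIdx d)
            hra).toWord.fstIdx ≠ some ℓ.1 := by
          rw [cons_fstIdx]; simp [Ne.symm hℓm]
        rw [← cons_eq_smul (hmw := hfi) (hgr := hgrℓ), cons_fstIdx]

end Amalgam

section CenterLemma

variable {ι : Type*} {H : Type*} {G : ι → Type*} [Group H] [∀ i, Group (G i)]

theorem center_le_base_range (φ : ∀ i, H →* G i) (hφ : ∀ i, Injective (φ i))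
    (hprop : ∀ i : ι, ∃ j, j ≠ i ∧ ∃ a : G j, a ∉ (φ j).range)
    {z : PushoutI φ} (hz : z ∈ Subgroup.center (PushoutI φ)) :
    z ∈ (base φ).range := by
  classical
  obtain ⟨d⟩ := transversal_nonempty φ hφ
  by_contra hzr
  set w : NormalWord d := z • empty with hw
  have hwprod : w.prod = z := by
    rw [hw, prod_smul, prod_empty, mul_one]
  have hred : ∀ l ∈ w.toWord.toList, l.2 ∉ (φ l.1).range := fun l hl =>
    not_mem_range_of_mem_set d (w.normalized l.1 l.2 hl) (w.toWord.ne_one l hl)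
  cases hlist : w.toWord.toList with
  | nil =>
    apply hzr
    have h1 : w.toWord.prod = 1 := by
      rw [Word.prod, hlist]; simp
    rw [← hwprod, prod, h1, map_one, mul_one]
    exact MonoidHom.mem_range.2 ⟨w.head, rfl⟩
  | cons ℓ L' =>
    obtain ⟨j, hj, a, ha⟩ := hprop ℓ.1
    have hcentral : ∀ g : PushoutI φ, g * z = z * g := fun g =>
      (Subgroup.mem_center_iff.1 hz g)
    have hwfst : w.toWord.fstIdx = some ℓ.1 := by
      rw [Word.fstIdx, hlist]; rfl
    have hmwj : w.toWord.fstIdx ≠ some j := by rw [hwfst]; simp [Ne.symm hj]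
    have hN2 : ((of (φ := φ) j a * z) • empty (d := d)).toWord.fstIdx = some j := by
      rw [mul_smul, ← hw, ← cons_eq_smul (hmw := hmwj) (hgr := ha), cons_fstIdx]
    have hofprod : ofCoprodI (φ := φ) w.toWord.prod
        = (w.toWord.toList.map fun l => of (φ := φ) l.1 l.2).prod := by
      rw [Word.prod, map_list_prod, List.map_map]
      congr 1
    have hN1 : ((z * of (φ := φ) j a) • empty (d := d)).toWord.fstIdx = some ℓ.1 := by
      rw [mul_smul, ← cons_eq_smul (hmw := empty_fstIdx d) (hgr := ha),
        ← hwprod, prod, hofprod, mul_smul, fstIdx_base_smul, hlist]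
      exact key_fstIdx d L' ℓ (hlist ▸ w.toWord.chain_ne)
        (fun l hl => hred l (by rw [hlist]; exact hl)) a ha (Or.inl (Ne.symm hj))
    rw [← hcentral (of (φ := φ) j a)] at hN1
    rw [hN1] at hN2
    exact hj (Option.some.inj hN2).symm

end CenterLemma

section Decomposition

variable {V : Type} (G : SimpleGraph V) (v : V)

def stS : Set V := {u | u = v ∨ G.Adj v u}
def lkS : Set V := {u | G.Adj v u}

@[nolint unusedArguments]
def coS (_G : SimpleGraph V) (v : V) : Set V := {u | u ≠ v}

/-- the vertex sets of the two factors of the amalgam -/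
def ampSet : Bool → Set V := fun b => match b with
  | true => stS G v
  | false => coS G v

lemma lk_sub_amp : ∀ b, lkS G v ⊆ ampSet G v b := by
  intro b
  cases b
  · exact fun _ h => (G.ne_of_adj h).symm
  · exact fun _ h => Or.inr h

/-- the amalgamating maps -/
def ampPhi : ∀ b, RAAG (indG G (lkS G v)) →* RAAG (indG G (ampSet G v b)) :=
  fun b => raagSubIncl G (lk_sub_amp G v b)

lemma ampPhi_injective : ∀ b, Function.Injective (ampPhi G v b) :=
  fun b => raagSubIncl_injective G _

/-- map from the pushout to the RAAG -/
noncomputable def ampPsi : PushoutI (ampPhi G v) →* RAAG G :=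
  PushoutI.lift (fun b => raagIncl G (ampSet G v b)) (raagIncl G (lkS G v))
    (fun b => raagIncl_comp_subIncl G (lk_sub_amp G v b))

lemma ampPsi_of (b : Bool) (x : RAAG (indG G (ampSet G v b))) :
    ampPsi G v (of (φ := ampPhi G v) b x) = raagIncl G (ampSet G v b) x := by
  exact PushoutI.lift_of _ _ _ _

lemma ampPsi_base (x : RAAG (indG G (lkS G v))) :
    ampPsi G v (base (ampPhi G v) x) = raagIncl G (lkS G v) x := by
  exact PushoutI.lift_base _ _ _ _

lemma amp_bridge {u : V} (hu : G.Adj v u) (h1 : u ∈ ampSet G v false)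
    (h2 : u ∈ ampSet G v true) :
    of (φ := ampPhi G v) false (raagGen (indG G (ampSet G v false)) ⟨u, h1⟩)
      = of (φ := ampPhi G v) true (raagGen (indG G (ampSet G v true)) ⟨u, h2⟩) := by
  have e1 : raagGen (indG G (ampSet G v false)) ⟨u, h1⟩
      = ampPhi G v false (raagGen (indG G (lkS G v)) ⟨u, hu⟩) :=
    (raagSubIncl_gen G (lk_sub_amp G v false) ⟨u, hu⟩).symm
  have e2 : raagGen (indG G (ampSet G v true)) ⟨u, h2⟩
      = ampPhi G v true (raagGen (indG G (lkS G v)) ⟨u, hu⟩) :=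
    (raagSubIncl_gen G (lk_sub_amp G v true) ⟨u, hu⟩).symm
  rw [e1, e2, of_apply_eq_base, of_apply_eq_base]

lemma mem_ampSet_true_of_eq : v ∈ ampSet G v true := Or.inl rfl
lemma mem_ampSet_true_of_adj {u : V} (h : G.Adj v u) : u ∈ ampSet G v true := Or.inr h
lemma mem_ampSet_false_of_ne {u : V} (h : u ≠ v) : u ∈ ampSet G v false := h

/-- map from the RAAG to the pushout -/
noncomputable def ampTheta : RAAG G →* PushoutI (ampPhi G v) :=
  raagHom
    (fun u =>
      if h : u = v then
        of (φ := ampPhi G v) true (raagGen (indG G (ampSet G v true))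
          ⟨u, Or.inl h⟩)
      else of (φ := ampPhi G v) false (raagGen (indG G (ampSet G v false)) ⟨u, h⟩))
    (by
      intro x y hxy
      by_cases hx : x = v <;> by_cases hy : y = v
      · subst hx; subst hy; exact (G.irrefl hxy).elim
      · subst hx
        beta_reduce
        rw [dif_pos rfl, dif_neg hy, amp_bridge G x hxy hy (mem_ampSet_true_of_adj G x hxy)]
        exact (raagGen_commute (show (indG G (ampSet G x true)).Adj ⟨x, Or.inl rfl⟩
          ⟨y, Or.inr hxy⟩ from hxy)).map _
      · subst hy
        beta_reduce
        have hadj : G.Adj y x := hxy.symm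
        rw [dif_neg hx, dif_pos rfl, amp_bridge G y hadj hx (mem_ampSet_true_of_adj G y hadj)]
        exact (raagGen_commute (show (indG G (ampSet G y true)).Adj ⟨x, Or.inr hadj⟩
          ⟨y, Or.inl rfl⟩ from hadj.symm)).map _
      · beta_reduce
        rw [dif_neg hx, dif_neg hy]
        exact (raagGen_commute (show (indG G (ampSet G v false)).Adj ⟨x, hx⟩ ⟨y, hy⟩
          from hxy)).map _)

lemma ampTheta_gen (u : V) :
    ampTheta G v (raagGen G u) =
      if h : u = v then
        of (φ := ampPhi G v) true (raagGen (indG G (ampSet G v true)) ⟨u, Or.inl h⟩)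
      else of (φ := ampPhi G v) false (raagGen (indG G (ampSet G v false)) ⟨u, h⟩) :=
  raagHom_gen _ _ _

lemma ampPsi_comp_theta :
    (ampPsi G v).comp (ampTheta G v) = MonoidHom.id (RAAG G) := by
  apply raagHom_ext
  intro u
  simp only [MonoidHom.comp_apply, MonoidHom.id_apply, ampTheta_gen]
  by_cases h : u = v
  · rw [dif_pos h, ampPsi_of]
    simp
  · rw [dif_neg h, ampPsi_of]
    simp

lemma ampTheta_comp_psi :
    (ampTheta G v).comp (ampPsi G v) = MonoidHom.id (PushoutI (ampPhi G v)) := by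
  apply PushoutI.hom_ext_nonempty
  intro b
  apply raagHom_ext
  intro u
  simp only [MonoidHom.comp_apply, MonoidHom.id_apply, ampPsi_of, raagIncl_gen, ampTheta_gen]
  cases b
  · -- u : coS, so u.val ≠ v
    rw [dif_neg u.2]
  · -- u : stS
    by_cases h : u.val = v
    · rw [dif_pos h]
    · have hadj : G.Adj v u.val := u.2.resolve_left h
      rw [dif_neg h, amp_bridge G v hadj h (mem_ampSet_true_of_adj G v hadj)]

lemma ampTheta_surjective : Function.Surjective (ampTheta G v) := by
  intro y
  refine ⟨ampPsi G v y, ?_⟩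
  have := DFunLike.congr_fun (ampTheta_comp_psi G v) y
  simpa using this

/-- the generator of a vertex is not in the image of the link parabolic, inside
either factor -/
lemma gen_not_in_ampPhi_range (b : Bool) (u : V) (hu : u ∈ ampSet G v b)
    (hnadj : ¬ G.Adj v u) :
    raagGen (indG G (ampSet G v b)) ⟨u, hu⟩ ∉ (ampPhi G v b).range := by
  classical
  set χ : RAAG (indG G (ampSet G v b)) →* Multiplicative ℤ :=
    raagHom (fun x => if x.val = u then Multiplicative.ofAdd 1 else 1)
      (fun _ _ _ => Commute.all _ _) with hχ
  have hχφ : ∀ x, χ (ampPhi G v b x) = 1 := by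
    intro x
    have : χ.comp (ampPhi G v b) = 1 := by
      apply raagHom_ext
      intro w
      have hwu : w.val ≠ u := by
        intro hh
        exact hnadj (hh ▸ w.2)
      simp only [MonoidHom.comp_apply, MonoidHom.one_apply]
      rw [show ampPhi G v b = raagSubIncl G (lk_sub_amp G v b) from rfl, raagSubIncl_gen]
      rw [hχ, raagHom_gen]
      simp [hwu]
    exact DFunLike.congr_fun this x
  rintro ⟨x, hx⟩
  have h1 : χ (raagGen (indG G (ampSet G v b)) ⟨u, hu⟩) = Multiplicative.ofAdd 1 := by
    rw [hχ, raagHom_gen]; simp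
  rw [← hx, hχφ] at h1
  exact absurd h1.symm (by decide)

/-- central elements lie in every coordinate-deleted parabolic, provided the vertex
is not a cone vertex -/
lemma center_mem_coP {w : V} (hw : w ≠ v) (hnadj : ¬ G.Adj v w)
    {z : RAAG G} (hz : z ∈ Subgroup.center (RAAG G)) :
    z ∈ raagP G (coS G v) := by
  classical
  have hzc : ampTheta G v z ∈ Subgroup.center (PushoutI (ampPhi G v)) := by
    rw [Subgroup.mem_center_iff]
    intro g
    obtain ⟨x, rfl⟩ := ampTheta_surjective G v g
    rw [← map_mul, ← map_mul, Subgroup.mem_center_iff.1 hz x]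
  have hprop : ∀ i : Bool, ∃ j, j ≠ i ∧ ∃ a : RAAG (indG G (ampSet G v j)),
      a ∉ (ampPhi G v j).range := by
    intro i
    cases i
    · exact ⟨true, by simp, raagGen _ ⟨v, mem_ampSet_true_of_eq G v⟩,
        gen_not_in_ampPhi_range G v true v (mem_ampSet_true_of_eq G v) (G.irrefl)⟩
    · exact ⟨false, by simp, raagGen _ ⟨w, hw⟩,
        gen_not_in_ampPhi_range G v false w hw hnadj⟩
  obtain ⟨y, hy⟩ := center_le_base_range (ampPhi G v) (ampPhi_injective G v) hprop hzc
  have hz2 : z = raagIncl G (lkS G v) y := by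
    have h1 := DFunLike.congr_fun (ampPsi_comp_theta G v) z
    simp only [MonoidHom.comp_apply, MonoidHom.id_apply] at h1
    rw [← h1, ← hy, ampPsi_base]
  have hy_mem : raagIncl G (lkS G v) y ∈ raagP G (lkS G v) := by
    refine raag_generated ((raagP G (lkS G v)).comap (raagIncl G (lkS G v))) ?_ y
    intro u
    simp only [Subgroup.mem_comap, raagIncl_gen]
    exact raagGen_mem_P G u.2
  rw [hz2]
  exact raagP_mono G (fun u hu => (G.ne_of_adj hu).symm) hy_mem

/-- if the center is nontrivial, there is a cone vertex -/
lemma exists_cone_vertex {V : Type} [Fintype V] (G : SimpleGraph V)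
    (h : Subgroup.center (RAAG G) ≠ ⊥) :
    ∃ v : V, ∀ w : V, w ≠ v → G.Adj v w := by
  by_contra hc
  push_neg at hc
  apply h
  rw [eq_bot_iff]
  intro z hz
  rw [Subgroup.mem_bot]
  apply eq_one_of_mem_all_P G z
  intro v
  obtain ⟨w, hw, hnadj⟩ := hc v
  exact center_mem_coP G v hw hnadj hz

end Decomposition

section Cone

def bbgChar' {V : Type} (G : SimpleGraph V) : RAAG G →* Multiplicative ℤ :=
  PresentedGroup.toGroup (f := fun _ : V => Multiplicative.ofAdd (1 : ℤ)) (by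
    rintro r ⟨v, w, -, rfl⟩
    simp only [map_mul, map_inv, FreeGroup.lift_apply_of]
    group)

@[simp] lemma bbgChar'_gen {V : Type} (G : SimpleGraph V) (v : V) :
    bbgChar' G (raagGen G v) = Multiplicative.ofAdd (1 : ℤ) :=
  PresentedGroup.toGroup.of _

variable {V : Type} (G : SimpleGraph V) (v : V)

lemma prod_commute {A B : Type*} [Group A] [CommGroup B] {a c : A} (b d : B)
    (h : Commute a c) : Commute (a, b) (c, d) := by
  rw [Commute, SemiconjBy, Prod.mk_mul_mk, Prod.mk_mul_mk, h.eq, mul_comm b d]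

/-- The splitting map `A(Γ) → A(Γ - v) × ℤ` for a cone vertex `v`. -/
noncomputable def coneSplit (hv : ∀ w, w ≠ v → G.Adj v w) :
    RAAG G →* RAAG (indG G (coS G v)) × Multiplicative ℤ :=
  raagHom
    (fun u => if h : u = v then ((1 : RAAG (indG G (coS G v))), Multiplicative.ofAdd (1 : ℤ))
      else (raagGen (indG G (coS G v)) ⟨u, h⟩, 1))
    (by
      intro x y hxy
      by_cases hx : x = v <;> by_cases hy : y = v <;> beta_reduce
      · subst hx; subst hy; exact (G.irrefl hxy).elim
      · rw [dif_pos hx, dif_neg hy]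
        exact prod_commute _ _ (Commute.one_left _)
      · rw [dif_neg hx, dif_pos hy]
        exact prod_commute _ _ (Commute.one_right _)
      · rw [dif_neg hx, dif_neg hy]
        exact prod_commute _ _ (raagGen_commute
          (show (indG G (coS G v)).Adj ⟨x, hx⟩ ⟨y, hy⟩ from hxy)))

lemma coneSplit_gen (hv : ∀ w, w ≠ v → G.Adj v w) (u : V) :
    coneSplit G v hv (raagGen G u) =
      if h : u = v then ((1 : RAAG (indG G (coS G v))), Multiplicative.ofAdd (1 : ℤ))
      else (raagGen (indG G (coS G v)) ⟨u, h⟩, 1) :=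
  raagHom_gen _ _ _

lemma incl_commute_gen (hv : ∀ w, w ≠ v → G.Adj v w) (a : RAAG (indG G (coS G v))) :
    Commute (raagIncl G (coS G v) a) (raagGen G v) := by
  have hmem : raagIncl G (coS G v) a ∈ Subgroup.centralizer {raagGen G v} := by
    refine raag_generated ((Subgroup.centralizer {raagGen G v}).comap (raagIncl G (coS G v)))
      ?_ a
    intro u
    simp only [Subgroup.mem_comap, raagIncl_gen]
    rw [Subgroup.mem_centralizer_iff]
    rintro g ⟨rfl⟩
    exact (raagGen_commute (G.adj_symm (hv u.val u.2))).eq.symm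
  have := Subgroup.mem_centralizer_iff.1 hmem (raagGen G v) rfl
  exact this.symm

/-- The inverse map `A(Γ - v) × ℤ → A(Γ)`. -/
noncomputable def coneMerge (hv : ∀ w, w ≠ v → G.Adj v w) :
    RAAG (indG G (coS G v)) × Multiplicative ℤ →* RAAG G :=
  MonoidHom.noncommCoprod (raagIncl G (coS G v)) (zpowersHom _ (raagGen G v))
    (by
      intro a t
      rw [zpowersHom_apply]
      exact (incl_commute_gen G v hv a).zpow_right _)

lemma coneMerge_comp_split (hv : ∀ w, w ≠ v → G.Adj v w) :
    (coneMerge G v hv).comp (coneSplit G v hv) = MonoidHom.id (RAAG G) := by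
  apply raagHom_ext
  intro u
  simp only [MonoidHom.comp_apply, MonoidHom.id_apply, coneSplit_gen]
  by_cases h : u = v
  · subst h
    rw [dif_pos rfl, coneMerge, MonoidHom.noncommCoprod_apply]
    simp [zpowersHom_apply]
  · rw [dif_neg h, coneMerge, MonoidHom.noncommCoprod_apply]
    simp [zpowersHom_apply]

lemma coneSplit_comp_incl (hv : ∀ w, w ≠ v → G.Adj v w) :
    (coneSplit G v hv).comp (raagIncl G (coS G v)) =
      MonoidHom.inl _ _ := by
  apply raagHom_ext
  intro u
  simp only [MonoidHom.comp_apply, raagIncl_gen, coneSplit_gen, MonoidHom.inl_apply]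
  rw [dif_neg u.2]

lemma coneSplit_comp_merge (hv : ∀ w, w ≠ v → G.Adj v w) :
    (coneSplit G v hv).comp (coneMerge G v hv) = MonoidHom.id _ := by
  apply MonoidHom.ext
  rintro ⟨a, t⟩
  simp only [MonoidHom.comp_apply, MonoidHom.id_apply, coneMerge,
    MonoidHom.noncommCoprod_apply, map_mul, zpowersHom_apply, map_zpow]
  have h1 : coneSplit G v hv (raagIncl G (coS G v) a) = (a, 1) := by
    have := DFunLike.congr_fun (coneSplit_comp_incl G v hv) a
    simpa using this
  have h2 : coneSplit G v hv (raagGen G v) = (1, Multiplicative.ofAdd (1 : ℤ)) := by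
    rw [coneSplit_gen, dif_pos rfl]
  rw [h1, h2]
  ext
  · simp
  · simp [← ofAdd_zsmul]

/-- the iso `A(Γ) ≃ A(Γ - v) × ℤ` -/
noncomputable def coneEquiv (hv : ∀ w, w ≠ v → G.Adj v w) :
    RAAG G ≃* RAAG (indG G (coS G v)) × Multiplicative ℤ :=
  MonoidHom.toMulEquiv (coneSplit G v hv) (coneMerge G v hv)
    (coneMerge_comp_split G v hv) (coneSplit_comp_merge G v hv)

/-- the character on the product -/
noncomputable def coneChar : RAAG (indG G (coS G v)) × Multiplicative ℤ →* Multiplicative ℤ :=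
  MonoidHom.noncommCoprod (bbgChar' (indG G (coS G v))) (MonoidHom.id _)
    (fun _ _ => Commute.all _ _)

lemma coneChar_comp (hv : ∀ w, w ≠ v → G.Adj v w) :
    (coneChar G v).comp (coneSplit G v hv) = bbgChar' G := by
  apply raagHom_ext
  intro u
  simp only [MonoidHom.comp_apply, coneSplit_gen, bbgChar'_gen]
  by_cases h : u = v
  · rw [dif_pos h, coneChar, MonoidHom.noncommCoprod_apply]
    simp
  · rw [dif_neg h, coneChar, MonoidHom.noncommCoprod_apply]
    simp

/-- the kernel of the product character is isomorphic to the RAAG factor -/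
noncomputable def coneKerEquiv :
    RAAG (indG G (coS G v)) ≃* (coneChar G v).ker := by
  have hmem : ∀ a : RAAG (indG G (coS G v)),
      (a, (bbgChar' (indG G (coS G v)) a)⁻¹) ∈ (coneChar G v).ker := by
    intro a
    rw [MonoidHom.mem_ker, coneChar, MonoidHom.noncommCoprod_apply]
    simp
  refine MulEquiv.ofBijective
    (((MonoidHom.id _).prod (bbgChar' (indG G (coS G v)))⁻¹).codRestrict
      (coneChar G v).ker (fun a => by simpa using hmem a)) ⟨?_, ?_⟩
  · intro a b hab
    have h2 := congrArg Subtype.val hab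
    have h3 := congrArg Prod.fst h2
    simpa using h3
  · rintro ⟨⟨a, t⟩, hat⟩
    refine ⟨a, ?_⟩
    rw [MonoidHom.mem_ker, coneChar, MonoidHom.noncommCoprod_apply] at hat
    simp only [MonoidHom.id_apply] at hat
    have ht : t = (bbgChar' (indG G (coS G v)) a)⁻¹ :=
      ((inv_eq_of_mul_eq_one_right hat).symm)
    apply Subtype.ext
    simp [MonoidHom.codRestrict, MonoidHom.prod, MonoidHom.inv_apply, ht]

end Cone


/-- If the RAAG on `Γ` has nontrivial center, then the Bestvina–Brady group of `Γ`
is a RAAG. -/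
theorem stmt_6 {V : Type} [Fintype V] (G : SimpleGraph V)
    (h : Subgroup.center (RAAG G) ≠ ⊥) :
    IsRAAG ↥(BBG G) := by
  obtain ⟨v, hv⟩ := exists_cone_vertex G h
  haveI : Fintype ↥(coS G v) := Fintype.ofFinite _
  set e := coneEquiv G v hv with he
  set K := (coneChar G v).ker with hK
  have hcoe : (e : RAAG G →* RAAG (indG G (coS G v)) × Multiplicative ℤ)
      = coneSplit G v hv := MonoidHom.ext fun x => rfl
  have hker : BBG G = Subgroup.comap (e : RAAG G →* _) K := by
    rw [hcoe, BBG]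
    have h1 : bbgChar G = bbgChar' G := rfl
    rw [h1, hK, ← coneChar_comp G v hv, ← MonoidHom.comap_ker]
  have hmap : Subgroup.comap (e : RAAG G →* _) K
      = Subgroup.map (e.symm : _ →* RAAG G) K :=
    Subgroup.comap_equiv_eq_map_symm e K
  exact ⟨↥(coS G v), inferInstance, indG G (coS G v),
    ⟨((MulEquiv.subgroupCongr (hker.trans hmap)).trans
      ((e.symm.subgroupMap K).symm)).trans (coneKerEquiv G v).symm⟩⟩
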